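/- For any connected graph G with at least three vertices that has a vertex of degree one, evc(G) ≠ mvc(G). -/

import Mathlib

namespace EVC

open SimpleGraph

variable {V : Type*}

/-- `S` is a vertex cover of `G`. -/
def IsVC (G : SimpleGraph V) (S : Set V) : Prop :=
  ∀ ⦃u v : V⦄, G.Adj u v → u ∈ S ∨ v ∈ S

/-- The minimum vertex cover number of `G`. -/
noncomputable def mvc (G : SimpleGraph V) : ℕ :=
  sInf {k | ∃ S : Set V, IsVC G S ∧ S.ncard = k}

/-- The minimum size of a vertex cover of `G` containing all vertices of `U`. -/
noncomputable def mvcOn (G : SimpleGraph V) (U : Set V) : ℕ :=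
  sInf {k | ∃ S : Set V, IsVC G S ∧ U ⊆ S ∧ S.ncard = k}

/-- Configuration `S'` is obtained from configuration `S` by a legal move of the guards
defending an attack on the edge `uv`: each guard stays or moves to an adjacent vertex
(at most one guard per vertex), and some guard moves across the attacked edge `uv`. -/
def Defends (G : SimpleGraph V) (S S' : Set V) (u v : V) : Prop :=
  ∃ f : V → V, Set.BijOn f S S' ∧ (∀ w ∈ S, f w = w ∨ G.Adj w (f w)) ∧
    ((u ∈ S ∧ f u = v) ∨ (v ∈ S ∧ f v = u))

/-- `C` is an eternal vertex cover class of `G` with `k` guards, each configuration being a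
vertex cover of size `k` containing `U`: from each configuration, every attack on an edge
can be defended by a legal move to another configuration in `C`. -/
def IsEvcClassOn (G : SimpleGraph V) (U : Set V) (k : ℕ) (C : Set (Set V)) : Prop :=
  C.Nonempty ∧ (∀ S ∈ C, IsVC G S ∧ U ⊆ S ∧ S.ncard = k) ∧
    ∀ S ∈ C, ∀ u v : V, G.Adj u v → ∃ S' ∈ C, Defends G S S' u v

/-- An eternal vertex cover class with no constraint on occupied vertices. -/
def IsEvcClass (G : SimpleGraph V) (k : ℕ) (C : Set (Set V)) : Prop :=
  IsEvcClassOn G ∅ k C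

/-- `evc_U(G)` : the minimum `k` admitting an eternal vertex cover class all of whose
configurations contain `U`. -/
noncomputable def evcOn (G : SimpleGraph V) (U : Set V) : ℕ :=
  sInf {k | ∃ C : Set (Set V), IsEvcClassOn G U k C}

/-- The eternal vertex cover number of `G`. -/
noncomputable def evc (G : SimpleGraph V) : ℕ := evcOn G ∅

/-- `x` is a cut vertex of the connected graph `G`. -/
def IsCutVertex (G : SimpleGraph V) (x : V) : Prop :=
  G.Connected ∧ ¬ (G.induce {v : V | v ≠ x}).Connected

/-- The set of cut vertices of `G`. -/
def cutVertices (G : SimpleGraph V) : Set V := {x | IsCutVertex G x}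

/-- `G` is locally connected: every open neighborhood induces a connected subgraph. -/
def LocallyConnected (G : SimpleGraph V) : Prop :=
  ∀ v : V, (G.induce (G.neighborSet v)).Connected

end EVC

open EVC SimpleGraph

/-- A connected graph with at least three vertices and a degree-one vertex
has `evc G ≠ mvc G`. -/
theorem evc_ne_mvc_of_degree_one {V : Type*} [Finite V] (G : SimpleGraph V)
    (hconn : G.Connected) (hcard : 3 ≤ Nat.card V)
    (hdeg : ∃ u : V, (G.neighborSet u).ncard = 1) :
    evc G ≠ mvc G := by
  classical
  intro heq
  obtain ⟨u, hu⟩ := hdeg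
  obtain ⟨w, hw⟩ := Set.ncard_eq_one.mp hu
  have hadj : G.Adj u w := by
    have : w ∈ G.neighborSet u := by rw [hw]; rfl
    exact this
  have hne : u ≠ w := G.ne_of_adj hadj
  -- mvc is positive
  have hmvc_pos : 1 ≤ mvc G := by
    rw [Nat.one_le_iff_ne_zero]
    intro h0
    have hne' : {k | ∃ S : Set V, IsVC G S ∧ S.ncard = k}.Nonempty :=
      ⟨Nat.card V, Set.univ, fun a b _ => Or.inl trivial, Set.ncard_univ V⟩
    have hmem := Nat.sInf_mem hne'
    rw [show sInf {k | ∃ S : Set V, IsVC G S ∧ S.ncard = k} = mvc G from rfl, h0] at hmem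
    obtain ⟨S, hS, hScard⟩ := hmem
    have hSe : S = ∅ := (Set.ncard_eq_zero (Set.toFinite S)).mp hScard
    rcases hS hadj with h | h <;> simp [hSe] at h
  -- key: no vertex cover of minimum size contains both u and w
  have key : ∀ S : Set V, IsVC G S → u ∈ S → w ∈ S → S.ncard = mvc G → False := by
    intro S hS huS hwS hcard
    have hcov : IsVC G (S \ {u}) := by
      intro a b hab
      rcases hS hab with ha | hb
      · by_cases hau : a = u
        · rw [hau] at hab
          have hb' : b ∈ G.neighborSet u := hab
          rw [hw, Set.mem_singleton_iff] at hb'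
          right
          rw [hb']
          exact ⟨hwS, by simpa using hne.symm⟩
        · exact Or.inl ⟨ha, hau⟩
      · by_cases hbu : b = u
        · rw [hbu] at hab
          have ha' : a ∈ G.neighborSet u := hab.symm
          rw [hw, Set.mem_singleton_iff] at ha'
          left
          rw [ha']
          exact ⟨hwS, by simpa using hne.symm⟩
        · exact Or.inr ⟨hb, hbu⟩
    have hle : mvc G ≤ (S \ {u}).ncard := Nat.sInf_le ⟨S \ {u}, hcov, rfl⟩
    have hdc : (S \ {u}).ncard = S.ncard - 1 := Set.ncard_diff_singleton_of_mem huS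
    omega
  -- the evc value is attained by some class
  have hEne : {k | ∃ C : Set (Set V), IsEvcClassOn G (∅ : Set V) k C}.Nonempty := by
    refine ⟨Nat.card V, {Set.univ}, ⟨Set.univ, rfl⟩, ?_, ?_⟩
    · rintro S rfl
      exact ⟨fun a b _ => Or.inl trivial, Set.empty_subset _, Set.ncard_univ V⟩
    · rintro S rfl a b hab
      refine ⟨Set.univ, rfl, Equiv.swap a b, ?_, ?_, ?_⟩
      · exact (Equiv.swap a b).bijective.bijOn_univ
      · intro z _
        by_cases hza : z = a
        · subst hza; right; rw [Equiv.swap_apply_left]; exact hab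
        by_cases hzb : z = b
        · subst hzb; right; rw [Equiv.swap_apply_right]; exact hab.symm
        · left; exact Equiv.swap_apply_of_ne_of_ne hza hzb
      · exact Or.inl ⟨trivial, Equiv.swap_apply_left a b⟩
  have hEmem := Nat.sInf_mem hEne
  rw [show sInf {k | ∃ C : Set (Set V), IsEvcClassOn G (∅ : Set V) k C} = evc G from rfl] at hEmem
  obtain ⟨C, hCne, hCcov, hCdef⟩ := hEmem
  -- every configuration is a minimum vertex cover
  have hmin : ∀ S ∈ C, IsVC G S ∧ S.ncard = mvc G := by
    intro S hS
    obtain ⟨h1, _, h3⟩ := hCcov S hS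
    exact ⟨h1, h3.trans heq⟩
  -- get a configuration containing u
  obtain ⟨S₀, hS₀⟩ := hCne
  obtain ⟨S₁, hS₁C, huS₁⟩ : ∃ S₁ ∈ C, u ∈ S₁ := by
    by_cases h : u ∈ S₀
    · exact ⟨S₀, hS₀, h⟩
    · obtain ⟨S', hS'C, f, hbij, _, hcross⟩ := hCdef S₀ hS₀ u w hadj
      rcases hcross with ⟨huS, _⟩ | ⟨hwS, hfw⟩
      · exact absurd huS h
      · exact ⟨S', hS'C, hfw ▸ hbij.mapsTo hwS⟩
  have hwS₁ : w ∉ S₁ := fun hwS₁ =>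
    key S₁ (hmin S₁ hS₁C).1 huS₁ hwS₁ (hmin S₁ hS₁C).2
  -- find a neighbor x of w with x ≠ u
  obtain ⟨x, hwx, hxu⟩ : ∃ x, G.Adj w x ∧ x ≠ u := by
    by_contra hcon
    push_neg at hcon
    have step : ∀ a b : V, (a = u ∨ a = w) → G.Adj a b → (b = u ∨ b = w) := by
      intro a b ha hab
      rcases ha with rfl | rfl
      · right
        have hb' : b ∈ G.neighborSet a := hab
        rw [hw] at hb'
        exact hb'
      · exact Or.inl (hcon b hab)
    have hwalk : ∀ (a z : V) (p : G.Walk a z), (a = u ∨ a = w) → (z = u ∨ z = w) := by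
      intro a z p
      induction p with
      | nil => exact id
      | cons h q ih => intro ha; exact ih (step _ _ ha h)
    have hall : ∀ z : V, z = u ∨ z = w := fun z => by
      obtain ⟨p⟩ := hconn.preconnected u z
      exact hwalk u z p (Or.inl rfl)
    have hsub : (Set.univ : Set V) ⊆ {u, w} := fun z _ => hall z
    have h2 : Nat.card V ≤ 2 := by
      calc Nat.card V = (Set.univ : Set V).ncard := (Set.ncard_univ V).symm
        _ ≤ ({u, w} : Set V).ncard := Set.ncard_le_ncard hsub (Set.toFinite _)
        _ ≤ ({w} : Set V).ncard + 1 := Set.ncard_insert_le u {w}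
        _ = 2 := by rw [Set.ncard_singleton]
    omega
  -- attack w x from S₁
  obtain ⟨S₂, hS₂C, f, hbij, hmoves, hcross⟩ := hCdef S₁ hS₁C w x hwx
  rcases hcross with ⟨hwS, _⟩ | ⟨hxS, hfx⟩
  · exact hwS₁ hwS
  · have hwS₂ : w ∈ S₂ := hfx ▸ hbij.mapsTo hxS
    have hfu : f u = u := by
      rcases hmoves u huS₁ with h | h
      · exact h
      · have hfu' : f u ∈ G.neighborSet u := h
        rw [hw] at hfu'
        have hux : u = x := hbij.injOn huS₁ hxS (hfu'.trans hfx.symm)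
        exact absurd hux.symm hxu
    have huS₂ : u ∈ S₂ := hfu ▸ hbij.mapsTo huS₁
    exact key S₂ (hmin S₂ hS₂C).1 huS₂ hwS₂ (hmin S₂ hS₂C).2
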